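/- Let ℓ ≥ 2, n ≥ 1, and let H be a finite connected graph of diameter at least ℓ. If Kₙ □ H is ℓ-distance-balanced, then H is ℓ-distance-balanced. -/

import Mathlib

open SimpleGraph

/-- The set of vertices of `G` strictly closer to `u` than to `v`. -/
def closerSet {V : Type*} (G : SimpleGraph V) (u v : V) : Set V :=
  {x | G.dist x u < G.dist x v}

/-- `G` is `ℓ`-distance-balanced: for every pair of vertices at distance `ℓ`, the number of
vertices strictly closer to the first equals the number strictly closer to the second. -/
def IsDistBalanced {V : Type*} (G : SimpleGraph V) (ℓ : ℕ) : Prop :=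
  ∀ u v : V, G.dist u v = ℓ → (closerSet G u v).ncard = (closerSet G v u).ncard

lemma boxProd_dist_le_walk {α β : Type*} {G : SimpleGraph α} {H : SimpleGraph β}
    (hG : G.Connected) (hH : H.Connected) :
    ∀ {p q : α × β} (w : (G □ H).Walk p q), G.dist p.1 q.1 + H.dist p.2 q.2 ≤ w.length := by
  intro p q w
  induction w with
  | nil => simp
  | @cons u v w h pw ih =>
    rw [SimpleGraph.boxProd_adj] at h
    rw [SimpleGraph.Walk.length_cons]
    rcases h with ⟨hadj, heq⟩ | ⟨hadj, heq⟩
    · have h1 : G.dist u.1 v.1 = 1 := SimpleGraph.dist_eq_one_iff_adj.mpr hadj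
      have := hG.dist_triangle (u := u.1) (v := v.1) (w := w.1)
      have h2 : H.dist u.2 w.2 = H.dist v.2 w.2 := by rw [heq]
      omega
    · have h1 : H.dist u.2 v.2 = 1 := SimpleGraph.dist_eq_one_iff_adj.mpr hadj
      have := hH.dist_triangle (u := u.2) (v := v.2) (w := w.2)
      have h2 : G.dist u.1 w.1 = G.dist v.1 w.1 := by rw [heq]
      omega

lemma boxProd_dist {α β : Type*} {G : SimpleGraph α} {H : SimpleGraph β}
    (hG : G.Connected) (hH : H.Connected) (a b : α) (x y : β) :
    (G □ H).dist (a, x) (b, y) = G.dist a b + H.dist x y := by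
  apply le_antisymm
  · obtain ⟨w1, hw1⟩ := hG.exists_walk_length_eq_dist a b
    obtain ⟨w2, hw2⟩ := hH.exists_walk_length_eq_dist x y
    have := SimpleGraph.dist_le ((w1.boxProdLeft H x).append (w2.boxProdRight G b))
    rw [SimpleGraph.Walk.length_append] at this
    have e1 : (w1.boxProdLeft H x).length = w1.length :=
      SimpleGraph.Walk.length_map _ _
    have e2 : (w2.boxProdRight G b).length = w2.length :=
      SimpleGraph.Walk.length_map _ _
    omega
  · obtain ⟨w, hw⟩ := (hG.boxProd hH).exists_walk_length_eq_dist (a, x) (b, y)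
    have := boxProd_dist_le_walk hG hH w
    simp only at this
    omega

theorem stmt11 {β : Type*} [Fintype β] (H : SimpleGraph β) (hH : H.Connected)
    (n ℓ : ℕ) (hn : 1 ≤ n) (hℓ : 2 ≤ ℓ) (hdiam : ℓ ≤ H.diam)
    (hdb : IsDistBalanced ((⊤ : SimpleGraph (Fin n)) □ H) ℓ) :
    IsDistBalanced H ℓ := by
  intro u v huv
  haveI : Nonempty (Fin n) := ⟨⟨0, hn⟩⟩
  have hK : (⊤ : SimpleGraph (Fin n)).Connected := SimpleGraph.connected_top
  set g : Fin n := ⟨0, hn⟩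
  have hd : ((⊤ : SimpleGraph (Fin n)) □ H).dist (g, u) (g, v) = ℓ := by
    rw [boxProd_dist hK hH, SimpleGraph.dist_self, zero_add, huv]
  have key := hdb (g, u) (g, v) hd
  have hset : ∀ s t : β, s ≠ t →
      closerSet ((⊤ : SimpleGraph (Fin n)) □ H) (g, s) (g, t)
        = (Set.univ : Set (Fin n)) ×ˢ closerSet H s t := by
    intro s t _
    ext ⟨a, x⟩
    simp only [closerSet, Set.mem_setOf_eq, Set.mem_prod, Set.mem_univ, true_and,
      boxProd_dist hK hH]
    omega
  have hne : u ≠ v := by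
    rintro rfl
    rw [SimpleGraph.dist_self] at huv
    omega
  rw [hset u v hne, hset v u hne.symm] at key
  have hcard : ∀ s : Set β, ((Set.univ : Set (Fin n)) ×ˢ s).ncard = n * s.ncard := by
    intro s
    rw [← Nat.card_coe_set_eq, ← Nat.card_coe_set_eq, Nat.card_congr (Equiv.Set.prod _ _), Nat.card_prod]
    congr 1
    rw [Nat.card_coe_set_eq, Set.ncard_univ, Nat.card_eq_fintype_card, Fintype.card_fin]
  rw [hcard, hcard] at key
  exact Nat.eq_of_mul_eq_mul_left (by omega) key
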